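/- Let m ≥ 5 be an integer, let A_m be the alternating group on m letters, and let π : G₁ → A_m be a minimal cover of finite groups. Then the only subgroup of G₁ of index strictly less than m is G₁ itself. -/

import Mathlib

open Equiv Equiv.Perm

private def altCongr {α β : Type*} [Fintype α] [DecidableEq α] [Fintype β] [DecidableEq β]
    (e : α ≃ β) : alternatingGroup α →* alternatingGroup β where
  toFun x := ⟨e.permCongr x, by
    have hx := x.2
    rw [Equiv.Perm.mem_alternatingGroup] at hx ⊢
    rwa [Equiv.Perm.sign_permCongr]⟩
  map_one' := by
    apply Subtype.ext; apply Equiv.ext; intro z; simp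
  map_mul' x y := by
    apply Subtype.ext; apply Equiv.ext; intro z
    simp [Equiv.permCongr_apply]

private theorem altCongr_surjective {α β : Type*} [Fintype α] [DecidableEq α] [Fintype β]
    [DecidableEq β] (e : α ≃ β) : Function.Surjective (altCongr e) := by
  intro y
  refine ⟨altCongr e.symm y, ?_⟩
  apply Subtype.ext; apply Equiv.ext; intro z
  simp [altCongr, Equiv.permCongr_apply]

private theorem alt_isSimple {β : Type*} [Fintype β] [DecidableEq β]
    (h : Fintype.card β = 5) : IsSimpleGroup (alternatingGroup β) := by
  have e : Fin 5 ≃ β := (Fintype.equivFinOfCardEq h).symm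
  haveI : Nontrivial (alternatingGroup β) :=
    alternatingGroup.nontrivial_of_three_le_card (by rw [Nat.card_eq_fintype_card]; omega)
  exact IsSimpleGroup.isSimpleGroup_of_surjective (altCongr e) (altCongr_surjective e)

private def altOfSubtype {α : Type*} [Fintype α] [DecidableEq α] {p : α → Prop} [DecidablePred p] :
    alternatingGroup (Subtype p) →* alternatingGroup α where
  toFun x := ⟨Equiv.Perm.ofSubtype (x : Equiv.Perm (Subtype p)), by
    rw [Equiv.Perm.mem_alternatingGroup, Equiv.Perm.sign_ofSubtype]; exact x.2⟩
  map_one' := Subtype.ext (map_one Equiv.Perm.ofSubtype)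
  map_mul' x y := Subtype.ext (map_mul Equiv.Perm.ofSubtype _ _)

set_option maxHeartbeats 1000000 in
private theorem alt_normal_eq_top {α : Type*} [Fintype α] [DecidableEq α]
    (h5 : 5 ≤ Fintype.card α) {N : Subgroup (alternatingGroup α)} (hN : N.Normal)
    (hbot : N ≠ ⊥) : N = ⊤ := by
  -- pick a nontrivial element g of N
  obtain ⟨g, hgN, hg1⟩ : ∃ g ∈ N, g ≠ 1 := by
    rw [ne_eq, Subgroup.eq_bot_iff_forall] at hbot
    push_neg at hbot
    exact hbot
  set σ : Equiv.Perm α := (g : Equiv.Perm α) with hσdef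
  have hσ1 : σ ≠ 1 := fun h => hg1 (Subtype.ext h)
  obtain ⟨a, ha⟩ : ∃ a, σ a ≠ a := by
    by_contra h
    push_neg at h
    exact hσ1 (Equiv.ext h)
  -- pick c avoiding a, σ a, σ (σ a)
  obtain ⟨c, hc⟩ : ∃ c, c ∉ ({a, σ a, σ (σ a)} : Finset α) := by
    by_contra h
    push_neg at h
    have h1 : (Finset.univ : Finset α) ⊆ {a, σ a, σ (σ a)} := fun x _ => h x
    have h2 := Finset.card_le_card h1
    simp only [Finset.card_univ] at h2
    have h3 : ({a, σ a, σ (σ a)} : Finset α).card ≤ 3 :=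
      Finset.card_le_three
    omega
  simp only [Finset.mem_insert, Finset.mem_singleton, not_or] at hc
  obtain ⟨hca, hcb, hcsb⟩ := hc
  have hab : a ≠ σ a := fun h => ha h.symm
  -- the three-cycle τ = (a, σ a, c)
  set τ : Equiv.Perm α := Equiv.swap a c * Equiv.swap a (σ a) with hτdef
  have hτmem : τ ∈ alternatingGroup α := by
    rw [Equiv.Perm.mem_alternatingGroup, map_mul, Equiv.Perm.sign_swap (Ne.symm hca),
      Equiv.Perm.sign_swap hab]
    simp
  set τA : alternatingGroup α := ⟨τ, hτmem⟩ with hτAdef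
  -- the commutator δ = σ τ σ⁻¹ τ⁻¹ lies in N
  set δA : alternatingGroup α := g * τA * g⁻¹ * τA⁻¹ with hδAdef
  have hδN : δA ∈ N := by
    have h1 : τA * g⁻¹ * τA⁻¹ ∈ N := hN.conj_mem _ (inv_mem hgN) τA
    have : δA = g * (τA * g⁻¹ * τA⁻¹) := by rw [hδAdef]; group
    rw [this]
    exact mul_mem hgN h1
  set δ : Equiv.Perm α := (δA : Equiv.Perm α) with hδdef
  have hδeq : δ = σ * τ * σ⁻¹ * τ⁻¹ := rfl
  -- δ moves a
  have hτia : τ⁻¹ a = c := by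
    rw [hτdef, mul_inv_rev, Equiv.Perm.mul_apply, Equiv.swap_inv, Equiv.swap_inv,
      Equiv.swap_apply_left, Equiv.swap_apply_of_ne_of_ne hca hcb]
  have hτc : τ c = a := by
    rw [hτdef, Equiv.Perm.mul_apply, Equiv.swap_apply_of_ne_of_ne hca hcb,
      Equiv.swap_apply_right]
  have hδa : δ a ≠ a := by
    rw [hδeq]
    simp only [Equiv.Perm.mul_apply, hτia]
    by_cases hd1 : σ⁻¹ c = c
    · rw [hd1, hτc]
      exact ha
    · have hd2 : σ⁻¹ c ≠ a := fun h => hcb (by rw [← h, ← Equiv.Perm.mul_apply, mul_inv_cancel, Equiv.Perm.one_apply])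
      have hd3 : σ⁻¹ c ≠ σ a := fun h => hcsb (by rw [← h, ← Equiv.Perm.mul_apply, mul_inv_cancel, Equiv.Perm.one_apply])
      have hτd : τ (σ⁻¹ c) = σ⁻¹ c := by
        rw [hτdef, Equiv.Perm.mul_apply, Equiv.swap_apply_of_ne_of_ne hd2 hd3,
          Equiv.swap_apply_of_ne_of_ne hd2 (fun h => hd1 h)]
      rw [hτd, ← Equiv.Perm.mul_apply, mul_inv_cancel, Equiv.Perm.one_apply]
      exact hca
  -- the support of δ is contained in a 5-element set
  have hτsupp : τ.support ⊆ ({a, σ a, c} : Finset α) := by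
    refine subset_trans (Equiv.Perm.support_mul_le _ _) ?_
    intro x hx
    simp only [Finset.sup_eq_union, Finset.mem_union,
      Equiv.Perm.support_swap (fun h => hca (h.symm)), Equiv.Perm.support_swap hab] at hx
    simp only [Finset.mem_insert, Finset.mem_singleton] at hx ⊢
    tauto
  have hδsupp : δ.support ⊆ ({a, σ a, c, σ (σ a), σ c} : Finset α) := by
    have h1 : δ = (σ * τ * σ⁻¹) * τ⁻¹ := by rw [hδeq]
    rw [h1]
    refine subset_trans (Equiv.Perm.support_mul_le _ _) ?_
    intro x hx
    simp only [Finset.sup_eq_union, Finset.mem_union, Equiv.Perm.support_inv] at hx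
    rcases hx with hx | hx
    · rw [Equiv.Perm.support_conj] at hx
      obtain ⟨y, hy, rfl⟩ := Finset.mem_map.1 hx
      have hy' := hτsupp hy
      simp only [Finset.mem_insert, Finset.mem_singleton] at hy' ⊢
      rcases hy' with rfl | rfl | rfl
      · simp [Equiv.toEmbedding_apply]
      · simp [Equiv.toEmbedding_apply]
      · simp [Equiv.toEmbedding_apply]
    · have := hτsupp hx
      simp only [Finset.mem_insert, Finset.mem_singleton] at this ⊢
      tauto
  obtain ⟨S, hSsub, hScard⟩ : ∃ S : Finset α,
      ({a, σ a, c, σ (σ a), σ c} : Finset α) ⊆ S ∧ S.card = 5 := by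
    refine Finset.exists_superset_card_eq ?_ h5
    refine le_trans (Finset.card_insert_le _ _) ?_
    refine le_trans (Nat.add_le_add_right (Finset.card_insert_le _ _) 1) ?_
    refine le_trans (Nat.add_le_add_right (Nat.add_le_add_right
      (Finset.card_insert_le _ _) 1) 1) ?_
    refine le_trans (Nat.add_le_add_right (Nat.add_le_add_right (Nat.add_le_add_right
      (Finset.card_insert_le _ _) 1) 1) 1) ?_
    simp
  letI instS : Fintype {x // x ∈ S} := Subtype.fintype fun x => x ∈ S
  have hcardS : Fintype.card {x // x ∈ S} = 5 :=
    (Fintype.card_of_subtype S (fun _ => Iff.rfl)).trans hScard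
  have hsuppS : δ.support ⊆ S := subset_trans hδsupp hSsub
  have key : ∀ x, δ x ≠ x → x ∈ S := fun x hx =>
    hsuppS (Equiv.Perm.mem_support.2 hx)
  have hiff : ∀ x, x ∈ S ↔ δ x ∈ S := by
    intro x
    constructor
    · intro hx
      by_cases h : δ x = x
      · rwa [h]
      · exact hsuppS (Equiv.Perm.apply_mem_support.2 (Equiv.Perm.mem_support.2 h))
    · intro hx
      by_contra h
      have : δ x = x := by
        by_contra h2
        exact h (key x h2)
      rw [this] at hx
      exact h hx
  set ρ : Equiv.Perm {x // x ∈ S} := δ.subtypePerm (fun x => (hiff x).symm) with hρdef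
  have hρδ : Equiv.Perm.ofSubtype ρ = δ :=
    Equiv.Perm.ofSubtype_subtypePerm (fun x => (hiff x).symm) key
  have hρsign : ρ ∈ alternatingGroup {x // x ∈ S} := by
    have h1 : Equiv.Perm.sign δ = 1 := δA.2
    have h2 := Equiv.Perm.sign_ofSubtype ρ
    rw [hρδ, h1] at h2
    rw [Equiv.Perm.mem_alternatingGroup]
    exact h2.symm
  have haS : a ∈ S := key a hδa
  have hρ1 : (⟨ρ, hρsign⟩ : alternatingGroup {x // x ∈ S}) ≠ 1 := by
    intro h
    apply hδa
    have h2 : ρ = 1 := congrArg Subtype.val h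
    have h3 : ρ ⟨a, haS⟩ = ⟨a, haS⟩ := by rw [h2]; rfl
    have h4 : δ a = a := congrArg Subtype.val h3
    exact h4
  -- transfer the problem to the alternating group on S, which is simple
  set Ψ : alternatingGroup {x // x ∈ S} →* alternatingGroup α := altOfSubtype with hΨdef
  set M : Subgroup (alternatingGroup {x // x ∈ S}) := N.comap Ψ with hMdef
  have hMn : M.Normal := hN.comap Ψ
  haveI : IsSimpleGroup (alternatingGroup {x // x ∈ S}) :=
    alt_isSimple hcardS
  have hM : M = ⊤ := by
    rcases hMn.eq_bot_or_eq_top with h | h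
    · exfalso
      have hmem : (⟨ρ, hρsign⟩ : alternatingGroup {x // x ∈ S}) ∈ M := by
        rw [hMdef, Subgroup.mem_comap]
        have hΨρ : Ψ ⟨ρ, hρsign⟩ = δA := Subtype.ext hρδ
        rw [hΨρ]; exact hδN
      rw [h, Subgroup.mem_bot] at hmem
      exact hρ1 hmem
    · exact h
  -- extract a three-cycle in N
  have e5 : {x // x ∈ S} ≃ Fin 5 := Fintype.equivFinOfCardEq hcardS
  set x : {x // x ∈ S} := e5.symm 0 with hx
  set y : {x // x ∈ S} := e5.symm 1 with hy
  set z : {x // x ∈ S} := e5.symm 2 with hz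
  have hxy : x ≠ y := fun h => by
    have := e5.symm.injective h; simp at this
  have hxz : x ≠ z := fun h => by
    have := e5.symm.injective h; simp at this
  have hyz : y ≠ z := fun h => by
    have := e5.symm.injective h; simp at this
  set θ : Equiv.Perm {x // x ∈ S} := Equiv.swap x y * Equiv.swap x z with hθdef
  have hθsign : θ ∈ alternatingGroup {x // x ∈ S} := by
    rw [Equiv.Perm.mem_alternatingGroup, map_mul, Equiv.Perm.sign_swap hxy,
      Equiv.Perm.sign_swap hxz]
    simp
  set θA : alternatingGroup {x // x ∈ S} := ⟨θ, hθsign⟩ with hθAdef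
  have hθN : Ψ θA ∈ N := by
    have hmem : θA ∈ M := hM ▸ Subgroup.mem_top θA
    rwa [hMdef, Subgroup.mem_comap] at hmem
  have hθ3 : Equiv.Perm.IsThreeCycle ((Ψ θA : alternatingGroup α) : Equiv.Perm α) := by
    have hval : ((Ψ θA : alternatingGroup α) : Equiv.Perm α) = Equiv.Perm.ofSubtype θ := rfl
    rw [hval, hθdef, map_mul, Equiv.Perm.ofSubtype_swap_eq, Equiv.Perm.ofSubtype_swap_eq]
    exact Equiv.Perm.isThreeCycle_swap_mul_swap_same
      (fun h => hxy (Subtype.ext h)) (fun h => hxz (Subtype.ext h))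
      (fun h => hyz (Subtype.ext h))
  have hclos := hθ3.alternating_normalClosure (by rw [Nat.card_eq_fintype_card]; exact h5)
  have hsingle : ({⟨((Ψ θA : alternatingGroup α) : Equiv.Perm α), hθ3.mem_alternatingGroup⟩} :
      Set (alternatingGroup α)) = {Ψ θA} := by
    congr 1
  rw [hsingle] at hclos
  haveI := hN
  rw [eq_top_iff, ← hclos]
  refine Subgroup.normalClosure_le_normal ?_
  rw [Set.singleton_subset_iff, SetLike.mem_coe]
  exact hθN


private theorem alt_index_lt_eq_top {α : Type*} [Fintype α] [DecidableEq α]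
    (h5 : 5 ≤ Fintype.card α) (K : Subgroup (alternatingGroup α))
    (hK : K.index < Fintype.card α) : K = ⊤ := by
  by_cases hc : K.normalCore = ⊥
  · exfalso
    -- the action on cosets gives an injection of A_α into a small symmetric group
    have hker : (MulAction.toPermHom (alternatingGroup α)
        ((alternatingGroup α) ⧸ K)).ker = ⊥ := by
      rw [← Subgroup.normalCore_eq_ker]
      exact hc
    have hinj := (MulAction.toPermHom (alternatingGroup α)
        ((alternatingGroup α) ⧸ K)).ker_eq_bot_iff.1 hker
    have hle : Nat.card (alternatingGroup α) ≤
        Nat.card (Equiv.Perm ((alternatingGroup α) ⧸ K)) :=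
      Nat.card_le_card_of_injective _ hinj
    haveI : DecidableEq ((alternatingGroup α) ⧸ K) := Classical.decEq _
    haveI : Fintype ((alternatingGroup α) ⧸ K) := Fintype.ofFinite _
    have hQ : Nat.card ((alternatingGroup α) ⧸ K) = K.index := rfl
    have hperm : Nat.card (Equiv.Perm ((alternatingGroup α) ⧸ K)) =
        Nat.factorial K.index := by
      rw [Nat.card_eq_fintype_card, Fintype.card_perm, ← hQ, Nat.card_eq_fintype_card]
    haveI : Nontrivial α := Fintype.one_lt_card_iff_nontrivial.1 (by omega)
    have h2 : 2 * Nat.card (alternatingGroup α) = Nat.factorial (Fintype.card α) := by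
      rw [Nat.card_eq_fintype_card, two_mul_card_alternatingGroup, Fintype.card_perm]
    set n := Fintype.card α with hn
    have hfac : Nat.factorial K.index ≤ Nat.factorial (n-1) := Nat.factorial_le (by omega)
    have hineq : Nat.factorial n ≤ 2 * Nat.factorial (n-1) := by
      rw [← h2]
      have := le_trans hle (le_of_eq hperm)
      omega
    have hmul : n * Nat.factorial (n-1) = Nat.factorial n := Nat.mul_factorial_pred (by omega)
    have hpos : 0 < Nat.factorial (n-1) := Nat.factorial_pos _
    nlinarith
  · have htop := alt_normal_eq_top h5 (Subgroup.normalCore_normal K) hc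
    have := K.normalCore_le
    rw [htop] at this
    exact top_le_iff.1 this

/-- Let `m ≥ 5` be an integer and `π : G₁ → A_m` a minimal cover of finite groups. Then
the only subgroup of `G₁` of index strictly less than `m` is `G₁` itself. -/
theorem minimalCover_alternating_index_lt {G₁ : Type*} [Group G₁] [Finite G₁] (m : ℕ)
    (hm : 5 ≤ m) (π : G₁ →* alternatingGroup (Fin m)) (hsurj : Function.Surjective π)
    (hmin : ∀ H : Subgroup G₁, Subgroup.map π H = ⊤ → H = ⊤) :
    ∀ H : Subgroup G₁, H.index < m → H = ⊤ := by
  intro H hH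
  have hne : H.index ≠ 0 := Subgroup.index_ne_zero_of_finite
  have hdvd : (H.map π).index ∣ H.index := Subgroup.index_map_dvd H hsurj
  have hle : (H.map π).index ≤ H.index := Nat.le_of_dvd (Nat.pos_of_ne_zero hne) hdvd
  refine hmin H (alt_index_lt_eq_top ?_ (H.map π) ?_)
  · simpa using hm
  · simpa using lt_of_le_of_lt hle hH
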